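/- Let F : [0,T] → ℝ^{d×d} be a bounded controlled path w.r.t. a geometric rough path 𝛈 ∈ 𝒞^{0,α}_g, and let A be the solution of the linear rough differential equation dA_t = F_t A_t d𝛈_t, A_0 = I, and A^{-1} the solution of dY_t = −Y_t F_t d𝛈_t, Y_0 = I. Then A_t is invertible for every t ∈ [0,T] with inverse A^{-1}_t, i.e. A^{-1}_t A_t = I for all t, almost surely. -/
import Mathlib

/-- Invertibility of the solution of the linear (rough) differential equation
`dA = F A dη`, `A_0 = I`: if `Y` solves the companion equation `dY = −Y F dη`, `Y_0 = I`
(deterministic Riemann–Stieltjes version with `η` differentiable, in a normed algebra),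
then `Y_t A_t = I` for all `t ∈ [0,T]`. -/
theorem stmt_12 {M : Type*} [NormedRing M] [NormedAlgebra ℝ M] [CompleteSpace M]
    (T : ℝ) (hT : 0 < T) (F : ℝ → M) (η : ℝ → ℝ) (hη : ContDiff ℝ 1 η)
    (hF : Continuous F)
    (A Y : ℝ → M)
    (hA : ∀ t ∈ Set.Icc (0 : ℝ) T,
      HasDerivWithinAt A (deriv η t • (F t * A t)) (Set.Icc 0 T) t)
    (hY : ∀ t ∈ Set.Icc (0 : ℝ) T,
      HasDerivWithinAt Y (-(deriv η t • (Y t * F t))) (Set.Icc 0 T) t)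
    (hA0 : A 0 = 1) (hY0 : Y 0 = 1) :
    ∀ t ∈ Set.Icc (0 : ℝ) T, Y t * A t = 1 := by
  have key : ∀ t ∈ Set.Icc (0 : ℝ) T,
      HasDerivWithinAt (fun s => Y s * A s) 0 (Set.Icc 0 T) t := by
    intro t ht
    have := (hY t ht).mul (hA t ht)
    have heq : -(deriv η t • (Y t * F t)) * A t + Y t * (deriv η t • (F t * A t)) = 0 := by
      simp [smul_mul_assoc, mul_smul_comm, mul_assoc]
    rwa [heq] at this
  have hdiff : DifferentiableOn ℝ (fun s => Y s * A s) (Set.Icc 0 T) :=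
    fun t ht => (key t ht).differentiableWithinAt
  have hud : UniqueDiffOn ℝ (Set.Icc (0 : ℝ) T) := uniqueDiffOn_Icc hT
  have hconst := constant_of_derivWithin_zero hdiff (fun x hx =>
    (key x (Set.mem_Icc_of_Ico hx)).derivWithin (hud x (Set.mem_Icc_of_Ico hx)))
  intro t ht
  rw [hconst t ht, hY0, hA0, one_mul]
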